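/- For every n ≥ 4, the directed graph on the set P'(n) of partitions of n other than {1,1,...,1}, with an EM-edge from p to p' whenever p' is obtained from p by replacing two parts k_i, k_j by the single part k_i + k_j, and an SM-edge from p to p' whenever p' is obtained from p by removing two units from one part k_i ≥ 3 (giving parts 2 and k_i - 2, dropping any resulting zero part is not needed since k_i - 2 ≥ 1) or removing one unit from each of two parts k_i, k_j ≥ 1 not both resulting in zero (giving parts 2, k_i - 1, k_j - 1, with zero parts deleted), is strongly connected. -/
import Mathlib


/-- A multiset of positive integers summing to `n`, i.e. a partition of `n`. -/
def IsPartitionOf (n : ℕ) (p : Multiset ℕ) : Prop :=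
  (∀ m ∈ p, 0 < m) ∧ p.sum = n

/-- A vertex of the graph on `P'(n)`: a partition of `n` other than `{1,…,1}`. -/
def PVertex (n : ℕ) (p : Multiset ℕ) : Prop :=
  IsPartitionOf n p ∧ p ≠ Multiset.replicate n 1

/-- External Merge edge: two parts `i, j` are replaced by the single part `i + j`. -/
def EMStep (p p' : Multiset ℕ) : Prop :=
  ∃ (i j : ℕ) (q : Multiset ℕ), p = i ::ₘ j ::ₘ q ∧ p' = (i + j) ::ₘ q

/-- Minimal Sideward Merge edge: either remove two units from a single part `k ≥ 3`
(giving new parts `2` and `k - 2`), or remove one unit from each of two parts `i, j`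
not both becoming zero (giving new parts `2, i - 1, j - 1`, with zero parts deleted). -/
def SMStep (p p' : Multiset ℕ) : Prop :=
  (∃ (m : ℕ) (q : Multiset ℕ), p = m ::ₘ q ∧ 3 ≤ m ∧ p' = 2 ::ₘ (m - 2) ::ₘ q) ∨
  (∃ (i j : ℕ) (q : Multiset ℕ), p = i ::ₘ j ::ₘ q ∧ ¬(i = 1 ∧ j = 1) ∧
      p' = (2 ::ₘ q) + Multiset.filter (fun m => m ≠ 0) ((i - 1) ::ₘ {j - 1}))

/-- An edge of the EM–SM graph on partitions. -/
def MergeStep (p p' : Multiset ℕ) : Prop := EMStep p p' ∨ SMStep p p'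

/-- An edge of the EM–SM graph staying within the vertex set `P'(n)`. -/
def StepOn (n : ℕ) (p p' : Multiset ℕ) : Prop :=
  MergeStep p p' ∧ PVertex n p ∧ PVertex n p'

/-! ### Auxiliary lemmas -/

lemma mk_vertex {n : ℕ} {p : Multiset ℕ} (hpos : ∀ m ∈ p, 0 < m) (hsum : p.sum = n)
    (h2 : ∃ m ∈ p, 2 ≤ m) : PVertex n p := by
  refine ⟨⟨hpos, hsum⟩, ?_⟩
  obtain ⟨m, hm, h2⟩ := h2
  intro h
  rw [h] at hm
  have := Multiset.eq_of_mem_replicate hm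
  omega

lemma vertex_two_le {n : ℕ} {p : Multiset ℕ} (h : PVertex n p) : ∃ m ∈ p, 2 ≤ m := by
  by_contra hc
  push_neg at hc
  apply h.2
  have hall : ∀ m ∈ p, m = 1 := fun m hm => by
    have h1 := h.1.1 m hm; have h2 := hc m hm; omega
  have hp : p = Multiset.replicate p.card 1 := Multiset.eq_replicate_card.2 hall
  have hsum : p.sum = p.card := by
    conv_lhs => rw [hp]
    simp
  have hcard : p.card = n := by rw [← h.1.2, hsum]
  rw [hp, hcard]

lemma em_edge {n i j : ℕ} {q : Multiset ℕ} (hi : 0 < i) (hj : 0 < j)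
    (hq : ∀ m ∈ q, 0 < m) (hsum : i + j + q.sum = n)
    (h2 : ∃ m ∈ i ::ₘ j ::ₘ q, 2 ≤ m) :
    StepOn n (i ::ₘ j ::ₘ q) ((i + j) ::ₘ q) := by
  refine ⟨Or.inl ⟨i, j, q, rfl, rfl⟩, ?_, ?_⟩
  · refine mk_vertex ?_ ?_ h2
    · intro m hm
      simp only [Multiset.mem_cons] at hm
      rcases hm with rfl | rfl | hm
      · exact hi
      · exact hj
      · exact hq m hm
    · simp [Multiset.sum_cons]; omega
  · refine mk_vertex ?_ ?_ ⟨i + j, by simp, by omega⟩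
    · intro m hm
      simp only [Multiset.mem_cons] at hm
      rcases hm with rfl | hm
      · omega
      · exact hq m hm
    · simp [Multiset.sum_cons]; omega

lemma sm1_edge {n m : ℕ} {q : Multiset ℕ} (hm : 3 ≤ m)
    (hq : ∀ m ∈ q, 0 < m) (hsum : m + q.sum = n) :
    StepOn n (m ::ₘ q) (2 ::ₘ (m - 2) ::ₘ q) := by
  refine ⟨Or.inr (Or.inl ⟨m, q, rfl, hm, rfl⟩), ?_, ?_⟩
  · refine mk_vertex ?_ ?_ ⟨m, by simp, by omega⟩
    · intro k hk
      simp only [Multiset.mem_cons] at hk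
      rcases hk with rfl | hk
      · omega
      · exact hq k hk
    · simp [Multiset.sum_cons]; omega
  · refine mk_vertex ?_ ?_ ⟨2, by simp, le_refl _⟩
    · intro k hk
      simp only [Multiset.mem_cons] at hk
      rcases hk with rfl | rfl | hk
      · omega
      · omega
      · exact hq k hk
    · simp [Multiset.sum_cons]; omega

/-- The transfer gadget: `{a, b} ⊎ q → {a+1, b-1} ⊎ q` for `a ≥ 1`, `b ≥ 2`. -/
lemma transfer {n a b : ℕ} {q : Multiset ℕ} (ha : 1 ≤ a) (hb : 2 ≤ b)
    (hq : ∀ m ∈ q, 0 < m) (hsum : a + b + q.sum = n) :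
    Relation.ReflTransGen (StepOn n) (a ::ₘ b ::ₘ q) ((a + 1) ::ₘ (b - 1) ::ₘ q) := by
  rcases Nat.lt_or_ge a 2 with ha2 | ha2
  · -- a = 1 : a single SM₂ step
    have ha1 : a = 1 := by omega
    subst ha1
    refine Relation.ReflTransGen.single ?_
    refine ⟨Or.inr (Or.inr ⟨1, b, q, rfl, by omega, ?_⟩), ?_, ?_⟩
    · have : Multiset.filter (fun m => m ≠ 0) ((1 - 1) ::ₘ ({b - 1} : Multiset ℕ))
          = {b - 1} := by
        rw [Multiset.filter_cons_of_neg _ (by simp), Multiset.filter_singleton,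
          if_pos (by omega)]
      rw [this]
      have : (2 ::ₘ q) + ({b - 1} : Multiset ℕ) = 2 ::ₘ (b - 1) ::ₘ q := by
        rw [add_comm, Multiset.singleton_add, Multiset.cons_swap]
      rw [this]
    · refine mk_vertex ?_ ?_ ⟨b, by simp, hb⟩
      · intro m hm
        simp only [Multiset.mem_cons] at hm
        rcases hm with rfl | rfl | hm
        · omega
        · omega
        · exact hq m hm
      · simp [Multiset.sum_cons]; omega
    · refine mk_vertex ?_ ?_ ⟨2, by simp, le_refl _⟩
      · intro m hm
        simp only [Multiset.mem_cons] at hm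
        rcases hm with rfl | rfl | hm
        · omega
        · omega
        · exact hq m hm
      · simp [Multiset.sum_cons]; omega
  · -- a ≥ 2 : SM₂ step then EM step
    have step1 : StepOn n (a ::ₘ b ::ₘ q) (2 ::ₘ (a - 1) ::ₘ (b - 1) ::ₘ q) := by
      refine ⟨Or.inr (Or.inr ⟨a, b, q, rfl, by omega, ?_⟩), ?_, ?_⟩
      · have : Multiset.filter (fun m => m ≠ 0) ((a - 1) ::ₘ ({b - 1} : Multiset ℕ))
            = (a - 1) ::ₘ {b - 1} := by
          rw [Multiset.filter_cons_of_pos _ (by simp; omega), Multiset.filter_singleton,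
            if_pos (by omega)]
        rw [this]
        have : (2 ::ₘ q) + ((a - 1) ::ₘ ({b - 1} : Multiset ℕ))
            = 2 ::ₘ (a - 1) ::ₘ (b - 1) ::ₘ q := by
          rw [Multiset.cons_add]
          congr 1
          rw [add_comm, Multiset.cons_add, Multiset.singleton_add]
        rw [this]
      · refine mk_vertex ?_ ?_ ⟨b, by simp, hb⟩
        · intro m hm
          simp only [Multiset.mem_cons] at hm
          rcases hm with rfl | rfl | hm
          · omega
          · omega
          · exact hq m hm
        · simp [Multiset.sum_cons]; omega
      · refine mk_vertex ?_ ?_ ⟨2, by simp, le_refl _⟩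
        · intro m hm
          simp only [Multiset.mem_cons] at hm
          rcases hm with rfl | rfl | rfl | hm
          · omega
          · omega
          · omega
          · exact hq m hm
        · simp [Multiset.sum_cons]; omega
    have step2 : StepOn n (2 ::ₘ (a - 1) ::ₘ (b - 1) ::ₘ q) ((a + 1) ::ₘ (b - 1) ::ₘ q) := by
      have h := em_edge (n := n) (i := 2) (j := a - 1) (q := (b - 1) ::ₘ q)
        (by omega) (by omega)
        (fun m hm => by
          simp only [Multiset.mem_cons] at hm
          rcases hm with rfl | hm
          · omega
          · exact hq m hm)
        (by simp [Multiset.sum_cons]; omega)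
        ⟨2, by simp, le_refl _⟩
      have he : 2 + (a - 1) = a + 1 := by omega
      rwa [he] at h
    exact Relation.ReflTransGen.head step1 (Relation.ReflTransGen.single step2)

lemma transfer_many {n : ℕ} (t : ℕ) : ∀ (a b : ℕ) (q : Multiset ℕ), 1 ≤ a → t + 1 ≤ b →
    (∀ m ∈ q, 0 < m) → a + b + q.sum = n →
    Relation.ReflTransGen (StepOn n) (a ::ₘ b ::ₘ q) ((a + t) ::ₘ (b - t) ::ₘ q) := by
  induction t with
  | zero => intro a b q _ _ _ _; simp; exact Relation.ReflTransGen.refl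
  | succ t ih =>
    intro a b q ha hb hq hs
    have h1 := transfer (n := n) (a := a) (b := b) (q := q) ha (by omega) hq hs
    have h2 := ih (a + 1) (b - 1) q (by omega) (by omega) hq (by omega)
    have e1 : a + 1 + t = a + (t + 1) := by omega
    have e2 : b - 1 - t = b - (t + 1) := by omega
    rw [e1, e2] at h2
    exact h1.trans h2

/-- Splitting the part `M` into `k` and `M - k`. -/
lemma split {n M k : ℕ} {q : Multiset ℕ} (hM : 3 ≤ M) (hk1 : 1 ≤ k) (hk2 : k + 1 ≤ M)
    (hq : ∀ m ∈ q, 0 < m) (hsum : M + q.sum = n) :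
    Relation.ReflTransGen (StepOn n) (M ::ₘ q) (k ::ₘ (M - k) ::ₘ q) := by
  have step1 := Relation.ReflTransGen.single (sm1_edge hM hq hsum)
  rcases Nat.lt_or_ge k 2 with hk | hk
  · -- k = 1 : one backwards transfer
    have hk1' : k = 1 := by omega
    subst hk1'
    have h := transfer (n := n) (a := M - 2) (b := 2) (q := q) (by omega) (le_refl _)
      hq (by omega)
    rw [show (2 : ℕ) - 1 = 1 from rfl] at h
    have e1 : (2 : ℕ) ::ₘ (M - 2) ::ₘ q = (M - 2) ::ₘ 2 ::ₘ q := Multiset.cons_swap _ _ _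
    have e2 : (M - 2 + 1) ::ₘ 1 ::ₘ q = 1 ::ₘ (M - 1) ::ₘ q := by
      rw [show M - 2 + 1 = M - 1 by omega, Multiset.cons_swap]
    rw [e2] at h
    rw [e1] at step1
    exact step1.trans h
  · -- k ≥ 2 : transfer k - 2 times
    have h := transfer_many (n := n) (k - 2) 2 (M - 2) q (by omega) (by omega) hq (by omega)
    rw [show 2 + (k - 2) = k by omega, show M - 2 - (k - 2) = M - k by omega] at h
    exact step1.trans h

/-- From the single big part we can build any partition with a part `≥ 2`. -/
lemma build {n : ℕ} : ∀ (c : ℕ) (p r : Multiset ℕ), p.card = c →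
    (∀ m ∈ p, 0 < m) → (∃ m ∈ p, 2 ≤ m) → (∀ m ∈ r, 0 < m) →
    p.sum + r.sum = n →
    Relation.ReflTransGen (StepOn n) (p.sum ::ₘ r) (p + r) := by
  intro c
  induction c with
  | zero =>
    intro p r hc _ h2 _ _
    rw [Multiset.card_eq_zero] at hc
    subst hc
    simp at h2
  | succ c ih =>
    intro p r hc hpos h2 hr hsum
    obtain ⟨k, hk, hk2⟩ := h2
    obtain ⟨p₀, rfl⟩ := Multiset.exists_cons_of_mem hk
    rcases c with _ | c'
    · -- p = {k}
      have : p₀ = 0 := by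
        rw [Multiset.card_cons] at hc
        rw [← Multiset.card_eq_zero]; omega
      subst this
      simp
      exact Relation.ReflTransGen.refl
    · -- p has at least two parts
      have hp₀ : p₀ ≠ 0 := by
        intro h; subst h; simp at hc
      obtain ⟨j, hj⟩ := Multiset.exists_mem_of_ne_zero hp₀
      obtain ⟨p₁, rfl⟩ := Multiset.exists_cons_of_mem hj
      have hkpos : 0 < k := by omega
      have hjpos : 0 < j := hpos j (by simp)
      have hp₁ : ∀ m ∈ p₁, 0 < m := fun m hm => hpos m (by simp [hm])
      set M := (k ::ₘ j ::ₘ p₁).sum with hM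
      have hMval : M = k + (j + p₁.sum) := by simp [hM, Multiset.sum_cons]
      have hM3 : 3 ≤ M := by omega
      have hsplit := split (n := n) (M := M) (k := j) (q := r) hM3 (by omega) (by omega)
        hr (by rw [hMval] at hsum ⊢; omega)
      have hMj : M - j = (k ::ₘ p₁).sum := by simp [Multiset.sum_cons]; omega
      have hih := ih (k ::ₘ p₁) (j ::ₘ r)
        (by rw [Multiset.card_cons] at hc ⊢; rw [Multiset.card_cons] at hc; omega)
        (fun m hm => by
          simp only [Multiset.mem_cons] at hm
          rcases hm with rfl | hm
          · exact hkpos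
          · exact hp₁ m hm)
        ⟨k, by simp, hk2⟩
        (fun m hm => by
          simp only [Multiset.mem_cons] at hm
          rcases hm with rfl | hm
          · exact hjpos
          · exact hr m hm)
        (by simp [Multiset.sum_cons] at hsum ⊢; omega)
      have e1 : j ::ₘ (M - j) ::ₘ r = (k ::ₘ p₁).sum ::ₘ j ::ₘ r := by
        rw [← hMj, Multiset.cons_swap]
      have e2 : (k ::ₘ p₁) + (j ::ₘ r) = (k ::ₘ j ::ₘ p₁) + r := by
        rw [Multiset.cons_add, Multiset.cons_add, Multiset.cons_add]
        congr 1
        rw [add_comm p₁ (j ::ₘ r), Multiset.cons_add]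
        congr 1
        exact add_comm r p₁
      rw [← e1, e2] at hih
      exact hsplit.trans hih

/-- Every vertex merges down to the single-part partition `{n}`. -/
lemma to_single {n : ℕ} (hn : 1 ≤ n) : ∀ (c : ℕ) (p : Multiset ℕ), p.card = c →
    PVertex n p → Relation.ReflTransGen (StepOn n) p {n} := by
  intro c
  induction c with
  | zero =>
    intro p hc hp
    rw [Multiset.card_eq_zero] at hc
    subst hc
    have := hp.1.2
    simp at this
    omega
  | succ c ih =>
    intro p hc hp
    rcases c with _ | c'
    · -- singleton
      rw [Multiset.card_eq_one] at hc
      obtain ⟨a, rfl⟩ := hc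
      have : a = n := by have := hp.1.2; simpa using this
      subst this
      exact Relation.ReflTransGen.refl
    · -- at least two parts: merge the first two
      have hp0 : p ≠ 0 := by intro h; subst h; simp at hc
      obtain ⟨i, hi⟩ := Multiset.exists_mem_of_ne_zero hp0
      obtain ⟨q₀, rfl⟩ := Multiset.exists_cons_of_mem hi
      have hq₀ : q₀ ≠ 0 := by intro h; subst h; simp at hc
      obtain ⟨j, hj⟩ := Multiset.exists_mem_of_ne_zero hq₀
      obtain ⟨q, rfl⟩ := Multiset.exists_cons_of_mem hj
      have hipos : 0 < i := hp.1.1 i (by simp)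
      have hjpos : 0 < j := hp.1.1 j (by simp)
      have hqpos : ∀ m ∈ q, 0 < m := fun m hm => hp.1.1 m (by simp [hm])
      have hsum : i + j + q.sum = n := by
        have := hp.1.2; simp [Multiset.sum_cons] at this; omega
      have hstep := em_edge (n := n) hipos hjpos hqpos hsum (vertex_two_le hp)
      have hnext : PVertex n ((i + j) ::ₘ q) := hstep.2.2
      have := ih ((i + j) ::ₘ q)
        (by rw [Multiset.card_cons] at hc ⊢; rw [Multiset.card_cons] at hc; omega)
        hnext
      exact Relation.ReflTransGen.head hstep this

/-- For every `n ≥ 4`, the directed graph on the partitions of `n` other than the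
all-ones partition, with EM and minimal SM edges, is strongly connected. -/
theorem stmt11 (n : ℕ) (hn : 4 ≤ n) :
    ∀ p p' : Multiset ℕ, PVertex n p → PVertex n p' →
      Relation.ReflTransGen (StepOn n) p p' := by
  intro p p' hp hp'
  have h1 : Relation.ReflTransGen (StepOn n) p {n} :=
    to_single (by omega) p.card p rfl hp
  have h2 : Relation.ReflTransGen (StepOn n) ({n} : Multiset ℕ) p' := by
    have hb := build (n := n) p'.card p' 0 rfl hp'.1.1 (vertex_two_le hp') (by simp)
      (by simp [hp'.1.2])
    simp only [add_zero] at hb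
    rw [hp'.1.2] at hb
    simpa using hb
  exact h1.trans h2
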